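/- Let N be a finite simple and cosimple matroid with an exact k-separation (A, B). Let M be a finite simple and cosimple matroid with distinct elements e, f ∈ E(M) \ E(N) such that M \ e / f = N. If M / f has a circuit C_e with e ∈ C_e ⊆ B ∪ {e} and M \ e has a cocircuit D_f with f ∈ D_f ⊆ B ∪ {f}, then r_M(A) = r_N(A) and r_M(B ∪ {e, f}) = r_N(B) + 1. -/

import Mathlib

open Set

namespace SeymourDecomp

variable {α : Type*}

/-- The rank of a set `X` in a (finite) matroid `M`: the largest cardinality of an
independent subset of `X`. -/
noncomputable def rk (M : Matroid α) (X : Set α) : ℕ :=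
  sSup {n | ∃ I, M.Indep I ∧ I ⊆ X ∧ I.ncard = n}

/-- The connectivity function `λ_M(X) = r(X) + r(E − X) − r(M)` (integer-valued). -/
noncomputable def lam (M : Matroid α) (X : Set α) : ℤ :=
  (rk M X : ℤ) + (rk M (M.E \ X) : ℤ) - (rk M M.E : ℤ)

/-- A circuit: a minimal dependent set. -/
def IsCircuit (M : Matroid α) (C : Set α) : Prop :=
  M.Dep C ∧ ∀ D, D ⊂ C → M.Indep D

/-- A cocircuit: a circuit of the dual matroid. -/
def IsCocircuit (M : Matroid α) (C : Set α) : Prop :=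
  IsCircuit M✶ C

/-- A loop: a one-element circuit. -/
def IsLoop (M : Matroid α) (e : α) : Prop := IsCircuit M {e}

/-- A coloop: a one-element cocircuit. -/
def IsColoop (M : Matroid α) (e : α) : Prop := IsCocircuit M {e}

/-- A matroid is simple if it has no loops and no 2-element circuits,
i.e. every circuit has at least 3 elements. -/
def Simple (M : Matroid α) : Prop := ∀ C, IsCircuit M C → 3 ≤ C.ncard

/-- A matroid is cosimple if its dual is simple. -/
def Cosimple (M : Matroid α) : Prop := Simple M✶

/-- Deletion of a set of elements. -/
def delete (M : Matroid α) (D : Set α) : Matroid α := M.restrict (M.E \ D)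

/-- Contraction of a set of elements: `M / C = (M✶ \ C)✶`. -/
def contract (M : Matroid α) (C : Set α) : Matroid α := (delete M✶ C)✶

/-- `N` is a minor of `M` if it is obtained from `M` by contracting a set and
deleting a disjoint set. -/
def IsMinor (N M : Matroid α) : Prop :=
  ∃ C D : Set α, C ⊆ M.E ∧ D ⊆ M.E ∧ Disjoint C D ∧ N = delete (contract M C) D

/-- `(A, B)` is a `k`-separation of `M`. -/
def KSep (M : Matroid α) (k : ℕ) (A B : Set α) : Prop :=
  A ∪ B = M.E ∧ Disjoint A B ∧ k ≤ A.ncard ∧ k ≤ B.ncard ∧ lam M A ≤ (k : ℤ) - 1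

/-- `(A, B)` is an exact `k`-separation of `M`. -/
def ExactKSep (M : Matroid α) (k : ℕ) (A B : Set α) : Prop :=
  A ∪ B = M.E ∧ Disjoint A B ∧ k ≤ A.ncard ∧ k ≤ B.ncard ∧ lam M A = (k : ℤ) - 1

/-- For `n ≥ 2`, `M` is `n`-connected if it has no `k`-separation for `k ≤ n − 1`. -/
def NConnected (M : Matroid α) (n : ℕ) : Prop :=
  ∀ k, 1 ≤ k → k ≤ n - 1 → ∀ A B : Set α, ¬ KSep M k A B

/-- A triangle: a 3-element circuit. -/
def Triangle (M : Matroid α) (T : Set α) : Prop := IsCircuit M T ∧ T.ncard = 3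

/-- A triad: a 3-element cocircuit. -/
def Triad (M : Matroid α) (T : Set α) : Prop := IsCocircuit M T ∧ T.ncard = 3

/-- Two matroids on the same ground type are isomorphic if there is a bijection
between their ground sets preserving independence. -/
def Iso (M N : Matroid α) : Prop :=
  ∃ φ : α → α, Set.BijOn φ M.E N.E ∧ ∀ I, I ⊆ M.E → (M.Indep I ↔ N.Indep (φ '' I))

/-- A class of matroids closed under minors. -/
def MinorClosed (𝓜 : Set (Matroid α)) : Prop :=
  ∀ M ∈ 𝓜, ∀ N : Matroid α, IsMinor N M → N ∈ 𝓜

/-- A class of matroids closed under isomorphism. -/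
def IsoClosed (𝓜 : Set (Matroid α)) : Prop :=
  ∀ M ∈ 𝓜, ∀ N : Matroid α, Iso M N → N ∈ 𝓜


section Aux

variable {M : Matroid α} {X Y I J C D : Set α} {x e f : α}

lemma rk_le_of_indep (hE : M.E.Finite) (hI : M.Indep I) (hIX : I ⊆ X) : I.ncard ≤ rk M X :=
  le_csSup ⟨M.E.ncard, fun n hn => by
    obtain ⟨J, hJ, -, rfl⟩ := hn
    exact Set.ncard_le_ncard hJ.subset_ground hE⟩ ⟨I, hI, hIX, rfl⟩

lemma rk_eq_ncard_of_basis' (hE : M.E.Finite) (hI : M.IsBasis' I X) : rk M X = I.ncard := by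
  refine le_antisymm (csSup_le ⟨0, ∅, M.empty_indep, empty_subset X, Set.ncard_empty α⟩ ?_)
    (rk_le_of_indep hE hI.indep hI.subset)
  rintro n ⟨J, hJ, hJX, rfl⟩
  by_contra hlt
  push_neg at hlt
  have hIfin : I.Finite := hE.subset hI.indep.subset_ground
  have hJfin : J.Finite := hE.subset hJ.subset_ground
  have hen : I.encard < J.encard := by
    rw [← hIfin.cast_ncard_eq, ← hJfin.cast_ncard_eq]
    exact_mod_cast hlt
  obtain ⟨y, hy, hyI⟩ := hI.indep.augment hJ hen
  exact hI.insert_not_indep ⟨hJX hy.1, hy.2⟩ hyI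

lemma exists_basis'_rk (hE : M.E.Finite) (X : Set α) :
    ∃ I, M.IsBasis' I X ∧ rk M X = I.ncard := by
  obtain ⟨I, hI⟩ := M.exists_isBasis' X
  exact ⟨I, hI, rk_eq_ncard_of_basis' hE hI⟩

lemma rk_mono (hE : M.E.Finite) (h : X ⊆ Y) : rk M X ≤ rk M Y := by
  obtain ⟨I, hI, hrk⟩ := exists_basis'_rk hE X
  rw [hrk]
  exact rk_le_of_indep hE hI.indep (hI.subset.trans h)

lemma rk_inter_ground (M : Matroid α) (X : Set α) : rk M (X ∩ M.E) = rk M X := by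
  unfold rk
  congr 1
  ext n
  constructor <;> rintro ⟨I, hI, hIX, rfl⟩
  · exact ⟨I, hI, hIX.trans inter_subset_left, rfl⟩
  · exact ⟨I, hI, subset_inter hIX hI.subset_ground, rfl⟩

lemma rk_restrict (M : Matroid α) (R X : Set α) : rk (M.restrict R) X = rk M (X ∩ R) := by
  unfold rk
  congr 1
  ext n
  constructor <;> rintro ⟨I, hI, hIX, rfl⟩
  · rw [Matroid.restrict_indep_iff] at hI
    exact ⟨I, hI.1, subset_inter hIX hI.2, rfl⟩
  · exact ⟨I, Matroid.restrict_indep_iff.2 ⟨hI, hIX.trans inter_subset_right⟩,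
      hIX.trans inter_subset_left, rfl⟩

lemma rk_insert_le (hE : M.E.Finite) : rk M (insert x X) ≤ rk M X + 1 := by
  obtain ⟨K, hK, hrk⟩ := exists_basis'_rk hE (insert x X)
  rw [hrk]
  have hKfin : K.Finite := hE.subset hK.indep.subset_ground
  by_cases hx : x ∈ K
  · have h1 : K \ {x} ⊆ X := fun y hy =>
      ((mem_insert_iff.1 (hK.subset hy.1)).resolve_left hy.2)
    have h2 : (K \ {x}).ncard ≤ rk M X :=
      rk_le_of_indep hE (hK.indep.subset diff_subset) h1
    have h3 : (K \ {x}).ncard + 1 = K.ncard := Set.ncard_diff_singleton_add_one hx hKfin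
    omega
  · have : K ⊆ X := fun y hy => (mem_insert_iff.1 (hK.subset hy)).resolve_left
      (fun h => hx (h ▸ hy))
    exact (rk_le_of_indep hE hK.indep this).trans (Nat.le_succ _)

lemma rk_insert_of_mem_closure (hE : M.E.Finite) (h : x ∈ M.closure X) :
    rk M (insert x X) = rk M X := by
  refine le_antisymm ?_ (rk_mono hE (subset_insert _ _))
  obtain ⟨I, hI, hrk⟩ := exists_basis'_rk hE X
  have hIcl : M.IsBasis I (M.closure X) := hI.isBasis_closure_right
  calc rk M (insert x X) = rk M (insert x X ∩ M.E) := (rk_inter_ground M _).symm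
    _ ≤ rk M (M.closure X) := by
        refine rk_mono hE (fun y hy => ?_)
        rcases mem_insert_iff.1 hy.1 with rfl | hyX
        · exact h
        · exact M.inter_ground_subset_closure X ⟨hyX, hy.2⟩
    _ = I.ncard := rk_eq_ncard_of_basis' hE hIcl.isBasis'
    _ = rk M X := hrk.symm

lemma rk_insert_of_not_mem_closure (hE : M.E.Finite) (hxE : x ∈ M.E)
    (h : x ∉ M.closure X) : rk M (insert x X) = rk M X + 1 := by
  obtain ⟨I, hI, hrk⟩ := exists_basis'_rk hE X
  have hxX : x ∉ X := fun hxX => h (M.inter_ground_subset_closure X ⟨hxX, hxE⟩)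
  have hxI : x ∉ I := fun h' => hxX (hI.subset h')
  have hind : M.Indep (insert x I) := by
    rw [hI.indep.insert_indep_iff_of_notMem hxI]
    exact ⟨hxE, fun hc => h (hI.closure_eq_closure ▸ hc)⟩
  refine le_antisymm (rk_insert_le hE) ?_
  have h2 := rk_le_of_indep hE hind (insert_subset_insert hI.subset)
  rwa [Set.ncard_insert_of_notMem hxI (hE.subset hI.indep.subset_ground), ← hrk] at h2

lemma IsCircuit.diff_singleton_indep (hC : IsCircuit M C) (hx : x ∈ C) :
    M.Indep (C \ {x}) :=
  hC.2 _ (Set.sdiff_singleton_ssubset.2 hx)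

lemma Simple.nonloop (hs : Simple M) (hx : x ∈ M.E) : M.Indep {x} := by
  by_contra h
  have hd : M.Dep {x} := (M.not_indep_iff (singleton_subset_iff.2 hx)).1 h
  have hcirc : IsCircuit M {x} :=
    ⟨hd, fun D hD => by rw [Set.ssubset_singleton_iff.1 hD]; exact M.empty_indep⟩
  have h3 := hs _ hcirc
  simp [Set.ncard_singleton] at h3

@[simp] lemma contract_ground (M : Matroid α) (C : Set α) :
    (contract M C).E = M.E \ C := rfl

lemma contract_singleton_base (hf : M.Indep {f}) {B : Set α} :
    (contract M {f}).IsBase B ↔ B ⊆ M.E \ {f} ∧ M.IsBase (insert f B) := by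
  have hfE : f ∈ M.E := hf.subset_ground rfl
  obtain ⟨Bf, hBf, hfBf⟩ := hf.exists_isBase_superset
  have hB₀ : M✶.IsBase (M.E \ Bf) := hBf.compl_isBase_dual
  have hB₀R : M.E \ Bf ⊆ M.E \ {f} := diff_subset_diff_right hfBf
  have step1 : ∀ B' : Set α, M✶.IsBasis' B' (M.E \ {f}) ↔
      (M✶.IsBase B' ∧ B' ⊆ M.E \ {f}) := by
    intro B'
    constructor
    · intro hB'
      refine ⟨?_, hB'.subset⟩
      by_contra hnot
      obtain ⟨y, hy, hyI⟩ := hB'.indep.exists_insert_of_not_isBase hnot hB₀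
      exact hB'.insert_not_indep ⟨hB₀R hy.1, hy.2⟩ hyI
    · rintro ⟨hB', hsub⟩
      refine (hB'.indep.isBasis_of_subset_of_subset_closure hsub ?_).isBasis'
      rw [hB'.closure_eq]
      exact diff_subset
  have hset : ∀ B' : Set α, B' ⊆ M.E \ {f} → M.E \ ((M.E \ {f}) \ B') = insert f B' := by
    intro B' hBR
    ext y
    simp only [mem_diff, mem_insert_iff, mem_singleton_iff, not_and, not_not]
    constructor
    · rintro ⟨hyE, hy⟩
      by_cases hyf : y = f
      · exact Or.inl hyf
      · exact Or.inr (hy ⟨hyE, hyf⟩)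
    · rintro (rfl | hyB)
      · exact ⟨hfE, fun hc => absurd rfl hc.2⟩
      · exact ⟨(hBR hyB).1, fun _ => hyB⟩
  have key : (contract M {f}).IsBase B ↔
      (M✶.restrict (M.E \ {f})).IsBase ((M.E \ {f}) \ B) ∧ B ⊆ M.E \ {f} :=
    Matroid.dual_isBase_iff' (M := M✶.restrict (M.E \ {f}))
  rw [key, Matroid.isBase_restrict_iff', step1, Matroid.dual_isBase_iff']
  constructor
  · rintro ⟨⟨⟨hbase, -⟩, -⟩, hBR⟩
    rw [hset B hBR] at hbase
    exact ⟨hBR, hbase⟩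
  · rintro ⟨hBR, hbase⟩
    refine ⟨⟨⟨?_, diff_subset.trans diff_subset⟩, diff_subset⟩, hBR⟩
    rw [hset B hBR]
    exact hbase

lemma contract_singleton_indep (hf : M.Indep {f}) {I : Set α} :
    (contract M {f}).Indep I ↔ f ∉ I ∧ M.Indep (insert f I) := by
  constructor
  · intro hI
    obtain ⟨B, hB, hIB⟩ := hI.exists_isBase_superset
    rw [contract_singleton_base hf] at hB
    refine ⟨fun hfI => (hB.1 (hIB hfI)).2 rfl, hB.2.indep.subset (insert_subset_insert hIB)⟩
  · rintro ⟨hfI, hind⟩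
    obtain ⟨B₁, hB₁, hsub⟩ := hind.exists_isBase_superset
    have hfB₁ : f ∈ B₁ := hsub (mem_insert f I)
    have hB : (contract M {f}).IsBase (B₁ \ {f}) := by
      rw [contract_singleton_base hf]
      constructor
      · exact diff_subset_diff_left hB₁.subset_ground
      · rwa [insert_diff_singleton, insert_eq_of_mem hfB₁]
    exact hB.indep.subset (subset_diff_singleton ((subset_insert f I).trans hsub) hfI)

end Aux

/-- Rank computation in the proof of Lemma 4.3(i): if `M \ e / f = N`, `M / f` has a
circuit `C_e` with `e ∈ C_e ⊆ B ∪ {e}`, and `M \ e` has a cocircuit `D_f` with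
`f ∈ D_f ⊆ B ∪ {f}`, then `r_M(A) = r_N(A)` and `r_M(B ∪ {e, f}) = r_N(B) + 1`. -/
theorem rank_eq_of_circuit_cocircuit
    (N : Matroid α) (hNfin : N.Finite) (hNsimple : Simple N) (hNcosimple : Cosimple N)
    (k : ℕ) (hk : 1 ≤ k) (A B : Set α) (hsep : ExactKSep N k A B)
    (M : Matroid α) (hMfin : M.Finite) (hMsimple : Simple M) (hMcosimple : Cosimple M)
    (e f : α) (hef : e ≠ f) (he : e ∈ M.E \ N.E) (hf : f ∈ M.E \ N.E)
    (hN : contract (delete M {e}) {f} = N)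
    (hC : ∃ C : Set α, IsCircuit (contract M {f}) C ∧ e ∈ C ∧ C ⊆ B ∪ {e})
    (hD : ∃ D : Set α, IsCocircuit (delete M {e}) D ∧ f ∈ D ∧ D ⊆ B ∪ {f}) :
    rk M A = rk N A ∧ rk M (B ∪ ({e, f} : Set α)) = rk N B + 1 := by
  obtain ⟨C, hCcirc, heC, hCB⟩ := hC
  obtain ⟨D, hDcoc, hfD, hDB⟩ := hD
  have hE : M.E.Finite := M.ground_finite
  have heE : e ∈ M.E := he.1
  have hfE : f ∈ M.E := hf.1
  obtain ⟨hABu, hABd, -, -, -⟩ := hsep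
  have hNE : N.E = (M.E \ {e}) \ {f} := by rw [← hN]; rfl
  set M' : Matroid α := M.restrict (M.E \ {e}) with hM'def
  have hM'fin : M'.E.Finite := hE.subset diff_subset
  have hfM'E : f ∈ M'.E := ⟨hfE, fun h => hef (mem_singleton_iff.1 h).symm⟩
  have hfnl : M.Indep {f} := hMsimple.nonloop hfE
  have hfM' : M'.Indep {f} :=
    Matroid.restrict_indep_iff.2 ⟨hfnl, singleton_subset_iff.2 hfM'E⟩
  have hNi : ∀ I : Set α, N.Indep I ↔ f ∉ I ∧ M'.Indep (insert f I) := by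
    intro I
    rw [← hN]
    exact contract_singleton_indep hfM'
  have hAN : A ⊆ N.E := hABu ▸ subset_union_left
  have hBN : B ⊆ N.E := hABu ▸ subset_union_right
  have hfA : f ∉ A := fun h => ((hNE ▸ hAN) h).2 rfl
  have hAM' : A ⊆ M'.E := fun y hy => ((hNE ▸ hAN) hy).1
  have hBM' : B ⊆ M'.E := fun y hy => ((hNE ▸ hBN) hy).1
  have hNfinE : N.E.Finite := by
    rw [hNE]; exact hE.subset (diff_subset.trans diff_subset)
  have hDcirc : IsCircuit M'✶ D := hDcoc
  have hDE : D ⊆ M'.E := hDcirc.1.subset_ground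
  -- f is not in the closure of M'.E \ D
  have hS1 : f ∉ M'.closure (M'.E \ D) := by
    intro hfcl
    have hDf : M'✶.Indep (D \ {f}) := hDcirc.diff_singleton_indep hfD
    obtain ⟨-, B₀, hB₀, hdisj⟩ := Matroid.dual_indep_iff_exists'.1 hDf
    have hB₀sub : B₀ ⊆ insert f (M'.E \ D) := by
      intro y hy
      by_cases hyD : y ∈ D
      · by_cases hyf : y = f
        · exact mem_insert_iff.2 (Or.inl hyf)
        · exact absurd hy (Set.disjoint_left.1 hdisj ⟨hyD, hyf⟩)
      · exact mem_insert_iff.2 (Or.inr ⟨hB₀.subset_ground hy, hyD⟩)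
    obtain ⟨Jd, hJd, hJdrk⟩ := exists_basis'_rk hM'fin (M'.E \ D)
    obtain ⟨K, hJK, hK⟩ := hJd.indep.subset_isBasis'_of_subset hJd.indep.subset_ground
    have hKbase : M'.IsBase K := Matroid.isBasis_ground_iff.1 (hJK.isBasis Subset.rfl)
    have hKfin : K.Finite := hM'fin.subset hJK.indep.subset_ground
    have hlt : rk M' (M'.E \ D) < rk M' M'.E := by
      rw [hJdrk, rk_eq_ncard_of_basis' hM'fin hJK]
      have hle : Jd.ncard ≤ K.ncard := Set.ncard_le_ncard hK hKfin
      rcases lt_or_eq_of_le hle with h | heq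
      · exact h
      · exfalso
        have hJdK : Jd = K := Set.eq_of_subset_of_ncard_le hK (le_of_eq heq.symm) hKfin
        have hDdep : ¬ M'✶.Indep D := hDcirc.1.not_indep
        refine hDdep (Matroid.dual_indep_iff_exists'.2 ⟨hDE, K, hKbase, ?_⟩)
        refine Set.disjoint_left.2 (fun a haD haK => ?_)
        have haJ : a ∈ Jd := by rw [hJdK]; exact haK
        exact (hJd.subset haJ).2 haD
    have h1 : rk M' M'.E ≤ rk M' (insert f (M'.E \ D)) := by
      rw [rk_eq_ncard_of_basis' hM'fin hB₀.isBasis_ground.isBasis']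
      exact rk_le_of_indep hM'fin hB₀.indep hB₀sub
    have h2 : rk M' (insert f (M'.E \ D)) = rk M' (M'.E \ D) :=
      rk_insert_of_mem_closure hM'fin hfcl
    omega
  have hAD : A ⊆ M'.E \ D := by
    intro y hy
    refine ⟨hAM' hy, fun hyD => ?_⟩
    rcases (mem_union _ _ _).1 (hDB hyD) with hyB | hyf
    · exact (Set.disjoint_left.1 hABd hy) hyB
    · exact hfA ((mem_singleton_iff.1 hyf) ▸ hy)
  have hins : ∀ I : Set α, M'.Indep I → I ⊆ A → M'.Indep (insert f I) := by
    intro I hI hIA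
    have hfI : f ∉ I := fun h => hfA (hIA h)
    rw [hI.insert_indep_iff_of_notMem hfI]
    exact ⟨hfM'E, fun hc => hS1 (M'.closure_subset_closure (hIA.trans hAD) hc)⟩
  have claimA : rk M A = rk N A := by
    refine le_antisymm ?_ ?_
    · obtain ⟨I, hI, hrk⟩ := exists_basis'_rk hE A
      rw [hrk]
      have hIM' : M'.Indep I :=
        Matroid.restrict_indep_iff.2 ⟨hI.indep, hI.subset.trans hAM'⟩
      have hNI : N.Indep I :=
        (hNi I).2 ⟨fun h => hfA (hI.subset h), hins I hIM' hI.subset⟩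
      exact rk_le_of_indep hNfinE hNI hI.subset
    · obtain ⟨J, hJ, hrk⟩ := exists_basis'_rk hNfinE A
      rw [hrk]
      obtain ⟨hfJ, hJind⟩ := (hNi J).1 hJ.indep
      have hJM : M.Indep J := hJind.of_restrict.subset (subset_insert f J)
      exact rk_le_of_indep hE hJM hJ.subset
  have hBMe : B ∪ {f} ⊆ M.E \ {e} := by
    intro y hy
    rcases (mem_union _ _ _).1 hy with hyB | hyf
    · exact hBM' hyB
    · exact (mem_singleton_iff.1 hyf) ▸ hfM'E
  have step1 : rk M (B ∪ {f}) = rk N B + 1 := by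
    refine le_antisymm ?_ ?_
    · obtain ⟨K, hKf, hK⟩ := hfnl.subset_isBasis'_of_subset
        (singleton_subset_iff.2 (Set.mem_union_right B (mem_singleton f)))
      rw [rk_eq_ncard_of_basis' hE hKf]
      have hfK : f ∈ K := hK rfl
      have hKfin : K.Finite := hE.subset hKf.indep.subset_ground
      have hKdiff : N.Indep (K \ {f}) := by
        rw [hNi]
        refine ⟨fun h => h.2 rfl, ?_⟩
        rw [insert_diff_singleton, insert_eq_of_mem hfK]
        exact Matroid.restrict_indep_iff.2 ⟨hKf.indep, hKf.subset.trans hBMe⟩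
      have hsub : K \ {f} ⊆ B := by
        intro y hy
        rcases (mem_union _ _ _).1 (hKf.subset hy.1) with h | h
        · exact h
        · exact absurd h hy.2
      have hle := rk_le_of_indep hNfinE hKdiff hsub
      have hc : (K \ {f}).ncard + 1 = K.ncard :=
        Set.ncard_diff_singleton_add_one hfK hKfin
      omega
    · obtain ⟨J, hJ, hrk⟩ := exists_basis'_rk hNfinE B
      rw [hrk]
      obtain ⟨hfJ, hJi⟩ := (hNi J).1 hJ.indep
      have hJM : M.Indep (insert f J) := hJi.of_restrict
      have hJfin : J.Finite := (hE.subset hJM.subset_ground).subset (subset_insert f J)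
      have hcard : (insert f J).ncard = J.ncard + 1 :=
        Set.ncard_insert_of_notMem hfJ hJfin
      have hle := rk_le_of_indep hE hJM
        (insert_subset (Set.mem_union_right B (mem_singleton f)) (hJ.subset.trans subset_union_left))
      omega
  have hCct : IsCircuit (contract M {f}) C := hCcirc
  have hCE : C ⊆ M.E \ {f} := hCct.1.subset_ground
  have hfC : f ∉ C := fun h => (hCE h).2 rfl
  have hCdiff : M.Indep (insert f (C \ {e})) := by
    have h := hCct.diff_singleton_indep heC
    rw [contract_singleton_indep hfnl] at h
    exact h.2
  have hCdep : ¬ M.Indep (insert f C) := fun hcon =>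
    hCct.1.not_indep ((contract_singleton_indep hfnl).2 ⟨hfC, hcon⟩)
  have heI : e ∉ insert f (C \ {e}) := by
    intro h
    rcases mem_insert_iff.1 h with h' | h'
    · exact hef h'
    · exact h'.2 rfl
  have hecl : e ∈ M.closure (insert f (C \ {e})) := by
    by_contra hnot
    apply hCdep
    have h := (hCdiff.insert_indep_iff_of_notMem heI).2 ⟨heE, hnot⟩
    rwa [insert_comm, insert_diff_singleton, insert_eq_of_mem heC] at h
  have hecl2 : e ∈ M.closure (B ∪ {f}) := by
    refine M.closure_subset_closure ?_ hecl
    intro y hy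
    rcases mem_insert_iff.1 hy with rfl | hy'
    · exact Set.mem_union_right B (mem_singleton _)
    · rcases (mem_union _ _ _).1 (hCB hy'.1) with h | h
      · exact Set.mem_union_left _ h
      · exact absurd h hy'.2
  have hunion : B ∪ ({e, f} : Set α) = insert e (B ∪ {f}) := by
    rw [show ({e, f} : Set α) = insert e {f} from rfl, union_insert]
  refine ⟨claimA, ?_⟩
  rw [hunion, rk_insert_of_mem_closure hE hecl2, step1]

end SeymourDecomp
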